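/- For every R > 0, the Assouad dimension of the space of nonempty finite subsets of the interval [0,R] endowed with the Hausdorff distance is infinite: for every α > 0 and every C > 0 there exist r > 0, β ∈ (0,1], and a nonempty finite subset A ⊆ [0,R] such that the open d_H-ball of radius r centred at A cannot be covered by fewer than C·β^{−α} open d_H-balls of radius at most β·r. -/

import Mathlib

open Metric

private lemma grid_dist (δ : ℝ) (hδ : 0 < δ) {i j : ℕ} (hij : i ≠ j) :
    δ ≤ dist ((i : ℝ) * δ) ((j : ℝ) * δ) := by
  rw [Real.dist_eq]
  have h1 : (1 : ℝ) ≤ |(i : ℝ) - (j : ℝ)| := by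
    have h : (i : ℤ) ≠ (j : ℤ) := by exact_mod_cast hij
    have h2 := Int.one_le_abs (sub_ne_zero.mpr h)
    calc (1:ℝ) ≤ |((i:ℤ) - (j:ℤ) : ℤ)| := by exact_mod_cast h2
    _ = |(i:ℝ) - (j:ℝ)| := by push_cast; rfl
  calc δ = 1 * δ := (one_mul δ).symm
  _ ≤ |(i:ℝ) - (j:ℝ)| * δ := by nlinarith
  _ = |(i:ℝ) * δ - (j:ℝ) * δ| := by
      rw [← sub_mul, abs_mul, abs_of_pos hδ]

private lemma sep_lemma (δ : ℝ) (S T : Finset ℝ) (hS : S.Nonempty) (hT : T.Nonempty)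
    (hd : ∀ x ∈ S, ∀ y ∈ T, x ≠ y → δ ≤ dist x y) (hne : ¬ (S : Set ℝ) ⊆ (T : Set ℝ)) :
    δ ≤ hausdorffDist (S : Set ℝ) (T : Set ℝ) := by
  obtain ⟨x, hxS, hxT⟩ := Set.not_subset.mp hne
  have hfin : EMetric.hausdorffEdist (S : Set ℝ) (T : Set ℝ) ≠ ⊤ :=
    hausdorffEdist_ne_top_of_nonempty_of_bounded (by exact_mod_cast hS) (by exact_mod_cast hT)
      S.finite_toSet.isBounded T.finite_toSet.isBounded
  refine le_trans ?_ (infDist_le_hausdorffDist_of_mem hxS hfin)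
  obtain ⟨y, hyT, hy⟩ := T.finite_toSet.isCompact.exists_infDist_eq_dist
    (by exact_mod_cast hT) x
  rw [hy]
  exact hd x (by exact_mod_cast hxS) y (by exact_mod_cast hyT)
    (fun h => hxT (by rw [h]; exact_mod_cast hyT))

theorem assouad_dim_hausdorff_bounded_infinite (R : ℝ) (hR : 0 < R) :
    ∀ α : ℝ, 0 < α → ∀ C : ℝ, 0 < C →
      ∃ r : ℝ, 0 < r ∧ ∃ β : ℝ, β ∈ Set.Ioc (0 : ℝ) 1 ∧
        ∃ A : {A : Set ℝ // A.Finite ∧ A.Nonempty ∧ A ⊆ Set.Icc 0 R},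
          ∀ (k : ℕ) (c : Fin k → {A : Set ℝ // A.Finite ∧ A.Nonempty ∧ A ⊆ Set.Icc 0 R})
            (ρ : Fin k → ℝ), (∀ i, ρ i ≤ β * r) →
            ({B : {A : Set ℝ // A.Finite ∧ A.Nonempty ∧ A ⊆ Set.Icc 0 R} |
                hausdorffDist A.val B.val < r} ⊆
              ⋃ i : Fin k, {B : {A : Set ℝ // A.Finite ∧ A.Nonempty ∧ A ⊆ Set.Icc 0 R} |
                hausdorffDist (c i).val B.val < ρ i}) →
            C * β ^ (-α) ≤ (k : ℝ) := by
  intro α hα C hC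
  set n : ℕ := ⌈α⌉₊ with hn
  have hαn : α ≤ (n : ℝ) := Nat.le_ceil α
  obtain ⟨q₀, hq₀⟩ := exists_nat_ge (C * (5 * ((n : ℝ) + 1)) ^ n)
  set q : ℕ := q₀ + 1 with hqdef
  have hq : C * (5 * ((n : ℝ) + 1)) ^ n ≤ (q : ℝ) := by
    refine hq₀.trans ?_; exact_mod_cast Nat.le_succ q₀
  set m : ℕ := (n + 1) * q with hmdef
  have hm1 : 1 ≤ m := Nat.one_le_iff_ne_zero.mpr
    (Nat.mul_ne_zero (Nat.succ_ne_zero n) (Nat.succ_ne_zero q₀))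
  have hmR : (0 : ℝ) < (m : ℝ) := by exact_mod_cast hm1
  have hm1R : (1 : ℝ) ≤ (m : ℝ) := by exact_mod_cast hm1
  have h5m : (1 : ℝ) ≤ 5 * (m : ℝ) := by linarith
  set δ : ℝ := R / m with hδdef
  have hδ : 0 < δ := div_pos hR hmR
  refine ⟨2 * R, by linarith, (5 * (m : ℝ))⁻¹,
    ⟨inv_pos.mpr (by linarith), inv_le_one_of_one_le₀ h5m⟩,
    ⟨({0} : Set ℝ), Set.finite_singleton 0, Set.singleton_nonempty 0,
      by intro x hx; rw [Set.mem_singleton_iff] at hx; subst hx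
         exact ⟨le_refl 0, hR.le⟩⟩, ?_⟩
  intro k c ρ hρ hcover
  -- the grid
  set G : Finset ℝ := (Finset.range (m + 1)).image (fun i : ℕ => (i : ℝ) * δ) with hGdef
  have hGicc : ∀ x ∈ G, x ∈ Set.Icc (0 : ℝ) R := by
    intro x hx
    obtain ⟨i, hi, rfl⟩ := Finset.mem_image.mp hx
    rw [Finset.mem_range] at hi
    have hi' : (i : ℝ) ≤ (m : ℝ) := by exact_mod_cast Nat.lt_succ_iff.mp hi
    constructor
    · positivity
    · calc (i : ℝ) * δ ≤ (m : ℝ) * δ := by nlinarith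
      _ = R := by rw [hδdef]; field_simp [hmR.ne']
  have hGsep : ∀ x ∈ G, ∀ y ∈ G, x ≠ y → δ ≤ dist x y := by
    intro x hx y hy hxy
    obtain ⟨i, _, rfl⟩ := Finset.mem_image.mp hx
    obtain ⟨j, _, rfl⟩ := Finset.mem_image.mp hy
    exact grid_dist δ hδ (fun h => hxy (by rw [h]))
  have hGcard : G.card = m + 1 := by
    rw [hGdef, Finset.card_image_of_injective _ ?_, Finset.card_range]
    intro a b hab
    exact Nat.cast_injective (mul_right_cancel₀ hδ.ne' hab)
  -- membership of grid subsets in the big ball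
  have hinball : ∀ S : Finset ℝ, S.Nonempty → (S : Set ℝ) ⊆ Set.Icc 0 R →
      hausdorffDist ({0} : Set ℝ) (S : Set ℝ) < 2 * R := by
    intro S hS hSicc
    have hle : hausdorffDist ({0} : Set ℝ) (S : Set ℝ) ≤ R := by
      apply hausdorffDist_le_of_mem_dist hR.le
      · intro x hx
        rw [Set.mem_singleton_iff] at hx; subst hx
        obtain ⟨y, hy⟩ := hS
        refine ⟨y, by exact_mod_cast hy, ?_⟩
        have := hSicc (by exact_mod_cast hy)
        rw [Real.dist_eq, abs_of_nonpos (by linarith [this.1])]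
        linarith [this.2]
      · intro y hy
        have := hSicc hy
        refine ⟨0, rfl, ?_⟩
        rw [Real.dist_eq, abs_of_nonneg (by linarith [this.1])]
        linarith [this.2]
    linarith
  -- handle k = 0
  rcases Nat.eq_zero_or_pos k with hk0 | hk
  · exfalso
    have hmem : (⟨({0} : Set ℝ), Set.finite_singleton 0, Set.singleton_nonempty 0,
        by intro x hx; rw [Set.mem_singleton_iff] at hx; subst hx; exact ⟨le_refl 0, hR.le⟩⟩ :
        {A : Set ℝ // A.Finite ∧ A.Nonempty ∧ A ⊆ Set.Icc 0 R}) ∈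
        {B : {A : Set ℝ // A.Finite ∧ A.Nonempty ∧ A ⊆ Set.Icc 0 R} |
          hausdorffDist ({0} : Set ℝ) B.val < 2 * R} := by
      simp only [Set.mem_setOf_eq, hausdorffDist_self_zero]
      linarith
    obtain ⟨i, _⟩ := Set.mem_iUnion.mp (hcover hmem)
    subst hk0; exact i.elim0
  -- the family of grid subsets
  set F : Finset (Finset ℝ) := G.powerset.erase ∅ with hFdef
  have hFmem : ∀ S ∈ F, S ⊆ G ∧ S.Nonempty := by
    intro S hS
    rw [hFdef, Finset.mem_erase, Finset.mem_powerset] at hS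
    exact ⟨hS.2, Finset.nonempty_iff_ne_empty.mpr hS.1⟩
  -- each grid subset, as an element of the subtype, is covered by some small ball
  have hcov : ∀ S ∈ F, ∃ i : Fin k, hausdorffDist (c i).val (S : Set ℝ) < ρ i := by
    intro S hS
    obtain ⟨hSG, hSne⟩ := hFmem S hS
    have hSicc : (S : Set ℝ) ⊆ Set.Icc 0 R := fun x hx => hGicc x (hSG (by exact_mod_cast hx))
    have : (⟨(S : Set ℝ), S.finite_toSet, by exact_mod_cast hSne, hSicc⟩ :
        {A : Set ℝ // A.Finite ∧ A.Nonempty ∧ A ⊆ Set.Icc 0 R}) ∈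
        {B : {A : Set ℝ // A.Finite ∧ A.Nonempty ∧ A ⊆ Set.Icc 0 R} |
          hausdorffDist ({0} : Set ℝ) B.val < 2 * R} := hinball S hSne hSicc
    obtain ⟨i, hi⟩ := Set.mem_iUnion.mp (hcover this)
    exact ⟨i, hi⟩
  -- the choice function
  classical
  set f : Finset ℝ → Fin k := fun S =>
    if h : ∃ i : Fin k, hausdorffDist (c i).val (S : Set ℝ) < ρ i then h.choose
    else ⟨0, hk⟩ with hfdef
  have hfprop : ∀ S ∈ F, hausdorffDist (c (f S)).val (S : Set ℝ) < ρ (f S) := by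
    intro S hS
    have h := hcov S hS
    simp only [hfdef, dif_pos h]
    exact h.choose_spec
  -- injectivity
  have hinj : Set.InjOn f (F : Set (Finset ℝ)) := by
    intro S hS T hT hST
    by_contra hne
    obtain ⟨hSG, hSne⟩ := hFmem S hS
    obtain ⟨hTG, hTne⟩ := hFmem T hT
    have hd : ∀ x ∈ S, ∀ y ∈ T, x ≠ y → δ ≤ dist x y :=
      fun x hx y hy => hGsep x (hSG hx) y (hTG hy)
    have hd' : ∀ x ∈ T, ∀ y ∈ S, x ≠ y → δ ≤ dist x y :=
      fun x hx y hy => hGsep x (hTG hx) y (hSG hy)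
    have hsep : δ ≤ hausdorffDist (S : Set ℝ) (T : Set ℝ) := by
      rcases (not_and_or.mp (fun h => hne (Finset.Subset.antisymm h.1 h.2))) with h | h
      · exact sep_lemma δ S T hSne hTne hd (fun hsub => h (fun x hx => by
          exact_mod_cast hsub (by exact_mod_cast hx)))
      · rw [hausdorffDist_comm]
        exact sep_lemma δ T S hTne hSne hd' (fun hsub => h (fun x hx => by
          exact_mod_cast hsub (by exact_mod_cast hx)))
    have h1 : hausdorffDist (c (f S)).val (S : Set ℝ) < ρ (f S) := hfprop S hS
    have h2 : hausdorffDist (c (f S)).val (T : Set ℝ) < ρ (f S) := by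
      rw [hST]; exact hfprop T hT
    have hfin1 : EMetric.hausdorffEdist (S : Set ℝ) (c (f S)).val ≠ ⊤ :=
      hausdorffEdist_ne_top_of_nonempty_of_bounded (by exact_mod_cast hSne)
        (c (f S)).prop.2.1 S.finite_toSet.isBounded (c (f S)).prop.1.isBounded
    have hρi : ρ (f S) ≤ (5 * (m : ℝ))⁻¹ * (2 * R) := hρ (f S)
    have hsmall : (5 * (m : ℝ))⁻¹ * (2 * R) = 2 * R / (5 * m) := by ring
    have hlt : δ < δ := by
      calc δ ≤ hausdorffDist (S : Set ℝ) (T : Set ℝ) := hsep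
      _ ≤ hausdorffDist (S : Set ℝ) (c (f S)).val
            + hausdorffDist (c (f S)).val (T : Set ℝ) := hausdorffDist_triangle hfin1
      _ = hausdorffDist (c (f S)).val (S : Set ℝ)
            + hausdorffDist (c (f S)).val (T : Set ℝ) := by
          rw [hausdorffDist_comm (s := (S : Set ℝ)) (t := (c (f S)).val)]
      _ < ρ (f S) + ρ (f S) := by linarith
      _ ≤ 2 * (2 * R / (5 * m)) := by rw [hsmall] at hρi; linarith
      _ < R / m := by
          rw [show 2 * (2 * R / (5 * (m:ℝ))) = (4/5) * (R / (m:ℝ)) from by ring]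
          have hpos : 0 < R / (m : ℝ) := hδ
          linarith
      _ = δ := rfl
    exact lt_irrefl δ hlt
  -- counting
  have hcard : F.card ≤ k := by
    have := Finset.card_le_card_of_injOn f (fun S _ => Finset.mem_univ (f S)) hinj
    simpa using this
  have hFcard : F.card = 2 ^ (m + 1) - 1 := by
    rw [hFdef, Finset.card_erase_of_mem (Finset.empty_mem_powerset G),
      Finset.card_powerset, hGcard]
  have hcount : (2 : ℝ) ^ m ≤ (k : ℝ) := by
    have h1 : 2 ^ m ≤ 2 ^ (m + 1) - 1 := by
      have : 2 ^ m + 1 ≤ 2 ^ (m + 1) := by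
        rw [pow_succ]
        nlinarith [Nat.one_le_two_pow (n := m)]
      omega
    have : 2 ^ m ≤ k := by omega
    exact_mod_cast this
  -- final arithmetic
  have hβ : ((5 * (m : ℝ))⁻¹) ^ (-α) = (5 * (m : ℝ)) ^ α := by
    rw [Real.inv_rpow (by linarith : (0:ℝ) ≤ 5 * (m:ℝ)), Real.rpow_neg (by linarith), inv_inv]
  rw [hβ]
  have hq0 : (0:ℝ) ≤ (q:ℝ) := Nat.cast_nonneg q
  have step1 : (5*(m:ℝ)) ^ α ≤ (5*(m:ℝ)) ^ ((n:ℕ):ℝ) :=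
    Real.rpow_le_rpow_of_exponent_le h5m hαn
  have step2 : (5*(m:ℝ)) ^ ((n:ℕ):ℝ) = (5*(m:ℝ)) ^ (n:ℕ) := Real.rpow_natCast _ n
  have hmcast : (5*(m:ℝ)) = (5*((n:ℝ)+1)) * (q:ℝ) := by
    rw [hmdef]; push_cast; ring
  have step3 : C * (5*(m:ℝ)) ^ (n:ℕ) ≤ (q:ℝ) ^ (n+1) := by
    rw [hmcast, mul_pow, ← mul_assoc]
    calc C * (5*((n:ℝ)+1)) ^ (n:ℕ) * (q:ℝ)^(n:ℕ) ≤ (q:ℝ) * (q:ℝ)^(n:ℕ) :=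
          mul_le_mul_of_nonneg_right hq (by positivity)
    _ = (q:ℝ)^(n+1) := by ring
  have hq2 : (q:ℝ) ≤ 2 ^ q := by exact_mod_cast (Nat.lt_two_pow_self (n := q)).le
  have step4 : (q:ℝ)^(n+1) ≤ (2:ℝ)^m := by
    calc (q:ℝ)^(n+1) ≤ ((2:ℝ)^q)^(n+1) := pow_le_pow_left₀ hq0 hq2 _
    _ = (2:ℝ)^m := by rw [← pow_mul]; congr 1; rw [hmdef]; ring
  calc C * (5*(m:ℝ)) ^ α ≤ C * (5*(m:ℝ)) ^ ((n:ℕ):ℝ) :=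
        mul_le_mul_of_nonneg_left step1 hC.le
  _ = C * (5*(m:ℝ)) ^ (n:ℕ) := by rw [step2]
  _ ≤ (q:ℝ)^(n+1) := step3
  _ ≤ (2:ℝ)^m := step4
  _ ≤ (k:ℝ) := hcount
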